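/- arXiv:2601.05869 — 2 statements merged into one kernel-verified Lean document; each statement's English description precedes it below -/
import Mathlib

section
/- Let h : ℝ → ℝ be C¹ with L := ‖h'‖_{L^∞}, c ∈ ℝ, g(t) = √((h(t)-c)₊), and let K_τ be a mollification kernel supported in (-τ, τ) with ∫|K_τ| ≤ 1 and ∫K_τ = 1. Then ‖(K_τ * g)² - g²‖_{L^∞} ≲ (1 + √L)·√τ·(‖g‖_{L^∞} + √(Lτ)) for an absolute implicit constant; in particular the mollification error of the squared amplitude is O(√τ) as τ → 0 (for fixed h). -/
open MeasureTheory

lemma sqrt_sub_sqrt_le_sqrt_sub {a b : ℝ} (hb : 0 ≤ b) (hba : b ≤ a) :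
    Real.sqrt a - Real.sqrt b ≤ Real.sqrt (a - b) := by
  have ha : 0 ≤ a := hb.trans hba
  have h1 := Real.sq_sqrt ha
  have h2 := Real.sq_sqrt hb
  have h3 := Real.sq_sqrt (sub_nonneg.mpr hba)
  nlinarith [Real.sqrt_nonneg a, Real.sqrt_nonneg b, Real.sqrt_nonneg (a - b),
    mul_nonneg (Real.sqrt_nonneg b) (Real.sqrt_nonneg (a - b))]

lemma abs_sqrt_sub_sqrt_le {a b : ℝ} (ha : 0 ≤ a) (hb : 0 ≤ b) :
    |Real.sqrt a - Real.sqrt b| ≤ Real.sqrt |a - b| := by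
  rcases le_total b a with hba | hab
  · rw [abs_of_nonneg (sub_nonneg.mpr hba), abs_of_nonneg (by linarith [Real.sqrt_le_sqrt hba])]
    exact sqrt_sub_sqrt_le_sqrt_sub hb hba
  · rw [abs_of_nonpos (sub_nonpos.mpr hab), abs_of_nonpos (by linarith [Real.sqrt_le_sqrt hab])]
    rw [neg_sub, neg_sub]
    exact sqrt_sub_sqrt_le_sqrt_sub ha hab

/-- Mollification error for the squared amplitude.
For `g(t) = √((h(t)-c)₊)` with `L = ‖h'‖_∞` and a mollification kernel `K_τ`
supported in `(-τ,τ)` with `∫|K_τ| ≤ 1`, `∫K_τ = 1`, one has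
`‖(K_τ * g)² - g²‖_{L^∞} ≲ (1+√L)·√τ·(‖g‖_∞ + √(Lτ))`. -/
theorem mollification_error_squared_amplitude :
    ∃ C : ℝ, 0 < C ∧
      ∀ (h : ℝ → ℝ) (L c τ M : ℝ) (K : ℝ → ℝ),
        ContDiff ℝ 1 h → 0 ≤ L → (∀ x, |deriv h x| ≤ L) → 0 < τ →
        Integrable K →
        (Function.support K ⊆ Set.Ioo (-τ) τ) →
        (∫ s, |K s|) ≤ 1 → (∫ s, K s) = 1 →
        (∀ t, Real.sqrt (max (h t - c) 0) ≤ M) →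
        ∀ t : ℝ,
          |(∫ s, K s * Real.sqrt (max (h (t - s) - c) 0)) ^ 2
              - Real.sqrt (max (h t - c) 0) ^ 2|
            ≤ C * (1 + Real.sqrt L) * Real.sqrt τ * (M + Real.sqrt (L * τ)) := by
  refine ⟨2, by norm_num, ?_⟩
  intro h L c τ M K hC1 hL hderiv hτ hKint hsupp hKabs hKone hM t
  set g : ℝ → ℝ := fun u => Real.sqrt (max (h u - c) 0) with hgdef
  have hgnn : ∀ u, 0 ≤ g u := fun u => Real.sqrt_nonneg _
  have hM0 : 0 ≤ M := (hgnn 0).trans (hM 0)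
  have hgcont : Continuous g := by
    exact Real.continuous_sqrt.comp (((hC1.continuous.sub continuous_const).max continuous_const))
  -- Lipschitz bound for h
  have hlip : ∀ u v : ℝ, |h u - h v| ≤ L * |u - v| := by
    intro u v
    have hd : ∀ x ∈ (Set.univ : Set ℝ), DifferentiableAt ℝ h x :=
      fun x _ => (hC1.differentiable one_ne_zero).differentiableAt
    have hb : ∀ x ∈ (Set.univ : Set ℝ), ‖deriv h x‖ ≤ L := fun x _ => by
      simpa [Real.norm_eq_abs] using hderiv x
    have := convex_univ.norm_image_sub_le_of_norm_deriv_le hd hb (Set.mem_univ v) (Set.mem_univ u)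
    simpa [Real.norm_eq_abs] using this
  -- Hölder-1/2 bound for g
  have hghold : ∀ u v : ℝ, |g u - g v| ≤ Real.sqrt (L * |u - v|) := by
    intro u v
    have h1 : |max (h u - c) 0 - max (h v - c) 0| ≤ |h u - h v| := by
      have h1x := abs_max_sub_max_le_abs (h u - c) (h v - c) 0
      rwa [sub_sub_sub_cancel_right] at h1x
    calc |g u - g v| ≤ Real.sqrt |max (h u - c) 0 - max (h v - c) 0| :=
          abs_sqrt_sub_sqrt_le (le_max_right _ _) (le_max_right _ _)
      _ ≤ Real.sqrt (L * |u - v|) := Real.sqrt_le_sqrt (h1.trans (hlip u v))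
  have hgM : ∀ u, |g u| ≤ M := by
    intro u; rw [abs_of_nonneg (hgnn u)]; exact hM u
  -- Integrability
  have hmeas : AEStronglyMeasurable (fun s => g (t - s)) volume :=
    (hgcont.comp (continuous_const.sub continuous_id)).aestronglyMeasurable
  have hint1 : Integrable (fun s => g (t - s) * K s) :=
    hKint.bdd_mul (c := M) hmeas (Filter.Eventually.of_forall fun s => by simpa [Real.norm_eq_abs] using hgM (t - s))
  have hint1' : Integrable (fun s => K s * g (t - s)) := by
    simpa [mul_comm] using hint1
  set a : ℝ := ∫ s, K s * g (t - s) with hadef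
  set b : ℝ := g t with hbdef
  -- bound on |a|
  have haM : |a| ≤ M := by
    have h1 : |a| ≤ ∫ s, |K s * g (t - s)| :=
      norm_integral_le_integral_norm (fun s => K s * g (t - s))
    have h2 : (∫ s, |K s * g (t - s)|) ≤ ∫ s, |K s| * M := by
      refine integral_mono hint1'.abs (hKint.abs.mul_const M) fun s => ?_
      rw [abs_mul]
      exact mul_le_mul_of_nonneg_left (hgM _) (abs_nonneg _)
    have h3 : (∫ s, |K s| * M) = (∫ s, |K s|) * M := by
      rw [integral_mul_const]
    calc |a| ≤ (∫ s, |K s|) * M := by rw [← h3]; exact h1.trans h2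
      _ ≤ 1 * M := mul_le_mul_of_nonneg_right hKabs hM0
      _ = M := one_mul M
  -- bound on |a - b|
  have hKb : Integrable (fun s => K s * b) := hKint.mul_const b
  have hintd : Integrable (fun s => K s * (g (t - s) - b)) := by
    simpa [mul_sub, Pi.sub_def] using hint1'.sub hKb
  have hab : |a - b| ≤ Real.sqrt (L * τ) := by
    have hbeq : (∫ s, K s * b) = b := by
      rw [integral_mul_const, hKone, one_mul]
    have hsub : a - b = ∫ s, K s * (g (t - s) - b) := by
      have heq : (∫ s, K s * (g (t - s) - b)) = (∫ s, K s * g (t - s)) - ∫ s, K s * b := by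
        simp only [mul_sub]
        exact integral_sub hint1' hKb
      rw [heq, hbeq]
    have hpt : ∀ s, |K s * (g (t - s) - b)| ≤ |K s| * Real.sqrt (L * τ) := by
      intro s
      rcases eq_or_ne (K s) 0 with h0 | h0
      · simp [h0, mul_nonneg (abs_nonneg (K s)) (Real.sqrt_nonneg (L * τ))]
      · have hs : s ∈ Set.Ioo (-τ) τ := hsupp h0
        have hsτ : |s| ≤ τ := abs_le.mpr ⟨hs.1.le, hs.2.le⟩
        have h1 : |g (t - s) - b| ≤ Real.sqrt (L * |s|) := by
          have h1' := hghold (t - s) t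
          have heq : (t - s) - t = -s := by ring
          rw [heq, abs_neg] at h1'
          exact h1'
        have h2 : Real.sqrt (L * |s|) ≤ Real.sqrt (L * τ) :=
          Real.sqrt_le_sqrt (mul_le_mul_of_nonneg_left hsτ hL)
        rw [abs_mul]
        exact mul_le_mul_of_nonneg_left (h1.trans h2) (abs_nonneg _)
    calc |a - b| ≤ ∫ s, |K s * (g (t - s) - b)| := by
          rw [hsub]
          exact norm_integral_le_integral_norm (fun s => K s * (g (t - s) - b))
      _ ≤ ∫ s, |K s| * Real.sqrt (L * τ) :=
          integral_mono hintd.abs (hKint.abs.mul_const _) hpt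
      _ = (∫ s, |K s|) * Real.sqrt (L * τ) := integral_mul_const _ _
      _ ≤ 1 * Real.sqrt (L * τ) := mul_le_mul_of_nonneg_right hKabs (Real.sqrt_nonneg _)
      _ = Real.sqrt (L * τ) := one_mul _
  -- conclusion
  have hbM : |b| ≤ M := hgM t
  have key : |a ^ 2 - b ^ 2| ≤ Real.sqrt (L * τ) * (2 * M) := by
    have hfac : a ^ 2 - b ^ 2 = (a - b) * (a + b) := by ring
    rw [hfac, abs_mul]
    have h1 : |a + b| ≤ 2 * M := (abs_add_le a b).trans (by linarith [haM, hbM])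
    exact mul_le_mul hab h1 (abs_nonneg _) (Real.sqrt_nonneg _)
  have hsplit : Real.sqrt (L * τ) = Real.sqrt L * Real.sqrt τ := Real.sqrt_mul hL τ
  show |a ^ 2 - b ^ 2| ≤ 2 * (1 + Real.sqrt L) * Real.sqrt τ * (M + Real.sqrt (L * τ))
  nlinarith [key, hsplit, Real.sqrt_nonneg L, Real.sqrt_nonneg τ, Real.sqrt_nonneg (L * τ),
    hM0, mul_nonneg (Real.sqrt_nonneg τ) hM0,
    mul_nonneg (Real.sqrt_nonneg τ) (Real.sqrt_nonneg (L * τ)),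
    mul_nonneg (mul_nonneg (Real.sqrt_nonneg L) (Real.sqrt_nonneg τ)) (Real.sqrt_nonneg (L * τ))]
end

section
/- Let h, H : [0,T] → ℝ be C^{N+1} functions with h(t) - H(t) ≥ δ > 0 for all t, and suppose that |(d/dt)^M (h - H)(t)| ≤ A·B^M for all 0 ≤ M ≤ N+1 and t ∈ [0,T], where A ≥ δ and B > 0. Then there exists a constant C(N) depending only on N such that |(d/dt)^{N+1} √(h - H)(t)| ≤ C(N) (A/√δ)·(A/δ)^{N}·B^{N+1} for all t ∈ [0,T]. -/
lemma rpow_half_iteratedDerivWithin (i : ℕ) :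
    ∀ y ∈ Set.Ici (1:ℝ),
      iteratedDerivWithin i (fun z : ℝ => z ^ ((1:ℝ)/2)) (Set.Ici 1) y
        = (∏ j ∈ Finset.range i, ((1:ℝ)/2 - j)) * y ^ ((1:ℝ)/2 - i) := by
  induction i with
  | zero => intro y hy; simp
  | succ i IH =>
    intro y hy
    have hu : UniqueDiffOn ℝ (Set.Ici (1:ℝ)) := uniqueDiffOn_Ici 1
    have hy0 : y ≠ 0 := by have : (1:ℝ) ≤ y := hy; linarith
    rw [iteratedDerivWithin_succ,
      derivWithin_congr IH (IH y hy)]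
    have hd : HasDerivWithinAt
        (fun z : ℝ => (∏ j ∈ Finset.range i, ((1:ℝ)/2 - j)) * z ^ ((1:ℝ)/2 - i))
        ((∏ j ∈ Finset.range i, ((1:ℝ)/2 - j)) *
          (((1:ℝ)/2 - i) * y ^ (((1:ℝ)/2 - i) - 1))) (Set.Ici 1) y :=
      ((Real.hasDerivAt_rpow_const (Or.inl hy0)).hasDerivWithinAt).const_mul _
    rw [hd.derivWithin (hu.uniqueDiffWithinAt hy), Finset.prod_range_succ]
    have he : ((1:ℝ)/2 - i) - 1 = (1:ℝ)/2 - ((i+1 : ℕ) : ℝ) := by push_cast; ring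
    rw [he]; ring

lemma prod_half_abs_le (i : ℕ) :
    |∏ j ∈ Finset.range i, ((1:ℝ)/2 - j)| ≤ (Nat.factorial i : ℝ) := by
  rw [Finset.abs_prod]
  calc ∏ j ∈ Finset.range i, |(1:ℝ)/2 - j|
      ≤ ∏ j ∈ Finset.range i, ((j:ℝ) + 1) := by
        apply Finset.prod_le_prod (fun j _ => abs_nonneg _)
        intro j _
        have hj : (0:ℝ) ≤ j := Nat.cast_nonneg j
        rw [abs_le]; constructor <;> linarith
    _ = (Nat.factorial i : ℝ) := by
        push_cast [← Finset.prod_range_add_one_eq_factorial i]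
        norm_num


/-- Quantitative chain rule for the square root of a function
bounded away from zero: if `h - H ≥ δ > 0` on `[0,T]` and
`|(d/dt)^M (h-H)| ≤ A·B^M` for all `M ≤ N+1` with `A ≥ δ`, then
`|(d/dt)^{N+1} √(h-H)| ≤ C(N)·(A/√δ)·(A/δ)^N·B^{N+1}` on `[0,T]`. -/
theorem iterated_deriv_sqrt_bound (N : ℕ) :
    ∃ C : ℝ, 0 < C ∧
      ∀ (h H : ℝ → ℝ) (T δ A B : ℝ), 0 < T → 0 < δ → δ ≤ A → 0 < B →
        ContDiffOn ℝ (N + 1 : ℕ) h (Set.Icc 0 T) →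
        ContDiffOn ℝ (N + 1 : ℕ) H (Set.Icc 0 T) →
        (∀ t ∈ Set.Icc (0:ℝ) T, δ ≤ h t - H t) →
        (∀ M ≤ N + 1, ∀ t ∈ Set.Icc (0:ℝ) T,
          |iteratedDerivWithin M (fun s => h s - H s) (Set.Icc 0 T) t|
            ≤ A * B ^ M) →
        ∀ t ∈ Set.Icc (0:ℝ) T,
          |iteratedDerivWithin (N + 1) (fun s => Real.sqrt (h s - H s))
              (Set.Icc 0 T) t|
            ≤ C * (A / Real.sqrt δ) * (A / δ) ^ N * B ^ (N + 1) := by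
  refine ⟨(Nat.factorial (N+1) : ℝ)^2, by positivity, ?_⟩
  intro h H T δ A B hT hδ hδA hB hh hH hlow hbound t ht
  set s : Set ℝ := Set.Icc (0:ℝ) T with hs_def
  have hs : UniqueDiffOn ℝ s := uniqueDiffOn_Icc hT
  have ht1 : UniqueDiffOn ℝ (Set.Ici (1:ℝ)) := uniqueDiffOn_Ici 1
  have hδ0 : δ ≠ 0 := hδ.ne'
  have hsd : Real.sqrt δ ≠ 0 := (Real.sqrt_pos.mpr hδ).ne'
  set f : ℝ → ℝ := fun z => (h z - H z) / δ with hf_def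
  have hmaps : Set.MapsTo f s (Set.Ici (1:ℝ)) := by
    intro z hz
    have := hlow z hz
    exact Set.mem_Ici.mpr ((one_le_div hδ).mpr this)
  have hft : f t ∈ Set.Ici (1:ℝ) := hmaps ht
  set c0 : ℝ := Real.sqrt δ * (f t) ^ ((1:ℝ)/2) with hc0_def
  set g : ℝ → ℝ := fun y => Real.sqrt δ * y ^ ((1:ℝ)/2) - c0 with hg_def
  -- smoothness
  have hsub : ContDiffOn ℝ (N + 1 : ℕ) (fun z => h z - H z) s := hh.sub hH
  have hf : ContDiffOn ℝ (N + 1 : ℕ) f s := hsub.div_const δ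
  have hrpow : ∀ (n : ℕ), ContDiffOn ℝ (n : ℕ) (fun y : ℝ => y ^ ((1:ℝ)/2)) (Set.Ici 1) := by
    intro n y hy
    have hy0 : y ≠ 0 := by have : (1:ℝ) ≤ y := hy; linarith
    exact (Real.contDiffAt_rpow_const_of_ne hy0).contDiffWithinAt
  have hg : ContDiffOn ℝ (N + 1 : ℕ) g (Set.Ici 1) :=
    (contDiffOn_const.mul (hrpow (N+1))).sub contDiffOn_const
  -- iterated derivatives of g bounded by C := √δ * (N+1)!
  have hC : ∀ i, i ≤ N + 1 →
      ‖iteratedFDerivWithin ℝ i g (Set.Ici 1) (f t)‖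
        ≤ Real.sqrt δ * (Nat.factorial (N+1) : ℝ) := by
    intro i hi
    rw [norm_iteratedFDerivWithin_eq_norm_iteratedDerivWithin]
    rcases Nat.eq_zero_or_pos i with rfl | hipos
    · simp only [iteratedDerivWithin_zero, hg_def, hc0_def, sub_self, norm_zero]
      positivity
    · have e1 : Set.EqOn g (fun y => (-c0) + Real.sqrt δ * y ^ ((1:ℝ)/2)) (Set.Ici 1) := by
        intro y hy; simp [hg_def]; ring
      rw [iteratedDerivWithin_congr e1 hft,
        iteratedDerivWithin_const_add hipos _,
        iteratedDerivWithin_const_mul hft ht1 _ (hrpow i (f t) hft),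
        rpow_half_iteratedDerivWithin i (f t) hft]
      have h1 : (f t) ^ ((1:ℝ)/2 - i) ≤ 1 :=
        Real.rpow_le_one_of_one_le_of_nonpos hft (by
          have : (0:ℝ) ≤ i := Nat.cast_nonneg i
          have : (1:ℝ) ≤ i := by exact_mod_cast hipos
          linarith)
      have h0 : (0:ℝ) < (f t) ^ ((1:ℝ)/2 - i) :=
        Real.rpow_pos_of_pos (lt_of_lt_of_le one_pos hft) _
      have h2 : |∏ j ∈ Finset.range i, ((1:ℝ)/2 - j)| ≤ (Nat.factorial (N+1) : ℝ) :=
        (prod_half_abs_le i).trans (by exact_mod_cast Nat.factorial_le hi)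
      rw [Real.norm_eq_abs, abs_mul, abs_mul, abs_of_nonneg (Real.sqrt_nonneg δ),
        abs_of_pos h0]
      calc Real.sqrt δ * (|∏ j ∈ Finset.range i, ((1:ℝ)/2 - j)| * (f t) ^ ((1:ℝ)/2 - i))
          ≤ Real.sqrt δ * ((Nat.factorial (N+1) : ℝ) * 1) := by
            apply mul_le_mul_of_nonneg_left _ (Real.sqrt_nonneg δ)
            exact mul_le_mul h2 h1 h0.le (by positivity)
        _ = Real.sqrt δ * (Nat.factorial (N+1) : ℝ) := by ring
  -- iterated derivatives of f bounded by D^i with D := (A/δ)*B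
  have hD : ∀ i, 1 ≤ i → i ≤ N + 1 →
      ‖iteratedFDerivWithin ℝ i f s t‖ ≤ ((A/δ) * B) ^ i := by
    intro i hi1 hi
    rw [norm_iteratedFDerivWithin_eq_norm_iteratedDerivWithin]
    have e1 : Set.EqOn f (fun z => δ⁻¹ * (h z - H z)) s := by
      intro z hz; simp [hf_def, div_eq_inv_mul]
    have hsubi : ContDiffOn ℝ (i : ℕ) (fun z => h z - H z) s :=
      hsub.of_le (by exact_mod_cast hi)
    rw [iteratedDerivWithin_congr e1 ht,
      iteratedDerivWithin_const_mul ht hs _ (hsubi t ht)]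
    rw [Real.norm_eq_abs, abs_mul, abs_of_pos (inv_pos.mpr hδ)]
    have hb := hbound i hi t ht
    calc δ⁻¹ * |iteratedDerivWithin i (fun z => h z - H z) s t|
        ≤ δ⁻¹ * (A * B ^ i) := by
          apply mul_le_mul_of_nonneg_left _ (inv_pos.mpr hδ).le
          exact hb
      _ = (A/δ) * B ^ i := by ring
      _ ≤ (A/δ)^i * B ^ i := by
          apply mul_le_mul_of_nonneg_right _ (by positivity)
          exact le_self_pow₀ ((one_le_div hδ).mpr hδA) (by omega)
      _ = ((A/δ) * B) ^ i := (mul_pow _ _ _).symm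
  -- composition bound
  have hcomp := norm_iteratedFDerivWithin_comp_le hg hf (le_refl _)
    ht1 hs hmaps ht hC hD
  -- identify g ∘ f with √(h-H) - c0
  have e2 : Set.EqOn (fun z => Real.sqrt (h z - H z)) (fun z => c0 + (g ∘ f) z) s := by
    intro z hz
    have hz0 : (0:ℝ) ≤ (h z - H z) / δ := le_trans one_pos.le (hmaps hz)
    simp only [Function.comp_apply, hg_def, hf_def]
    rw [← Real.sqrt_eq_rpow]
    rw [← Real.sqrt_mul hδ.le, mul_div_cancel₀ _ hδ0]
    ring
  have e3 : iteratedDerivWithin (N + 1) (fun z => Real.sqrt (h z - H z)) s t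
      = iteratedDerivWithin (N + 1) (g ∘ f) s t := by
    rw [iteratedDerivWithin_congr e2 ht,
      iteratedDerivWithin_const_add (Nat.succ_pos N) _]
  rw [e3, ← Real.norm_eq_abs, ← norm_iteratedFDerivWithin_eq_norm_iteratedDerivWithin]
  refine hcomp.trans (le_of_eq ?_)
  have key : Real.sqrt δ * (A / δ) = A / Real.sqrt δ := by
    rw [eq_div_iff hsd]
    rw [mul_comm (Real.sqrt δ) (A/δ), mul_assoc, Real.mul_self_sqrt hδ.le]
    field_simp
  rw [mul_pow, pow_succ (A/δ) N]
  calc (Nat.factorial (N+1) : ℝ) * (Real.sqrt δ * (Nat.factorial (N+1) : ℝ)) *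
        ((A/δ)^N * (A/δ) * B^(N+1))
      = (Nat.factorial (N+1) : ℝ)^2 * (Real.sqrt δ * (A/δ)) * (A/δ)^N * B^(N+1) := by ring
    _ = (Nat.factorial (N+1) : ℝ)^2 * (A / Real.sqrt δ) * (A/δ)^N * B^(N+1) := by rw [key]
end
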